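/- For all natural numbers s ≥ 1, q ≥ 0, and all x: Σ_{n=0}^{q} (-1)^{n+q} F_{2sn}(x)² = F_{2s}(x)² · ( binom(q+1,4)_{F_s(x)} + (-1)^{s+1}·L_{2s}(x)·binom(q+2,4)_{F_s(x)} + binom(q+3,4)_{F_s(x)} ), where binom(m,4)_{F_s(x)} is the s-Fibopolynomial. -/

import Mathlib

/-- Fibonacci polynomials evaluated at a real `x`. -/
def fibP : ℕ → ℝ → ℝ
  | 0, _ => 0
  | 1, _ => 1
  | n + 2, x => x * fibP (n + 1) x + fibP n x

/-- Lucas polynomials evaluated at a real `x`. -/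
def lucasP : ℕ → ℝ → ℝ
  | 0, _ => 2
  | 1, x => x
  | n + 2, x => x * lucasP (n + 1) x + lucasP n x

/-- Numerator of the `s`-Fibopolynomial `binom(m,4)_{F_s(x)}`:
`F_{sm}·F_{s(m-1)}·F_{s(m-2)}·F_{s(m-3)}` (it vanishes for `m < 4`). -/
def sFiboNum4 (s m : ℕ) (x : ℝ) : ℝ :=
  ∏ i ∈ Finset.range 4, fibP (s * (m - i)) x

/-- Denominator of the `s`-Fibopolynomial `binom(m,4)_{F_s(x)}`:
`F_s·F_{2s}·F_{3s}·F_{4s}`. -/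
def sFiboDen4 (s : ℕ) (x : ℝ) : ℝ :=
  ∏ i ∈ Finset.range 4, fibP (s * (i + 1)) x

/-- Generalized Fibonacci sequence with recurrence `u_{n+2} = L·u_{n+1} + e·u_n`. -/
def useq (L e : ℝ) : ℕ → ℝ
  | 0 => 0
  | 1 => 1
  | n + 2 => L * useq L e (n + 1) + e * useq L e n

lemma useq_two_step (L e : ℝ) (n : ℕ) :
    useq L e (n + 2) = L * useq L e (n + 1) + e * useq L e n := rfl

lemma useq_add (L e : ℝ) (m : ℕ) :
    ∀ n, useq L e (m + n + 1) = useq L e (m + 1) * useq L e (n + 1) + e * useq L e m * useq L e n := by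
  intro n
  induction n using Nat.twoStepInduction with
  | zero => simp [useq]
  | one => simp [useq, useq_two_step]; ring
  | more n ih1 ih2 =>
    rw [show m + (n + 2) + 1 = (m + n + 1) + 2 by ring, useq_two_step,
      show m + n + 1 + 1 = m + (n+1) + 1 by ring, ih2, ih1,
      useq_two_step L e (n+1), useq_two_step L e n]
    ring

def vprod (L e : ℝ) (m : ℕ) : ℝ := ∏ i ∈ Finset.range 4, useq L e (m - i)

lemma vprod_eq (L e : ℝ) (k : ℕ) :
    vprod L e (k + 3) = useq L e (k+3) * useq L e (k+2) * useq L e (k+1) * useq L e k := by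
  simp [vprod, Finset.prod_range_succ]

lemma key (L e : ℝ) (he : e = 1 ∨ e = -1) (q : ℕ) :
    (useq L e 1 * useq L e 2 * useq L e 3 * useq L e 4) * (useq L e (2*q+2))^2 =
      (useq L e 2)^2 * (vprod L e (q+1) + (e*L^2+3) * vprod L e (q+2)
        + (e*L^2+3) * vprod L e (q+3) + vprod L e (q+4)) := by
  match q with
  | 0 =>
    simp [vprod, Finset.prod_range_succ, useq, useq_two_step]
    ring
  | 1 =>
    have h5 : useq L e 5 = L * useq L e 4 + e * useq L e 3 := rfl
    have h4 : useq L e 4 = L * useq L e 3 + e * useq L e 2 := rfl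
    have h3 : useq L e 3 = L * useq L e 2 + e * useq L e 1 := rfl
    simp [vprod, Finset.prod_range_succ, h5, h4, h3]
    simp [useq]
    rcases he with rfl | rfl <;> ring
  | (k+2) =>
    rw [show 2*(k+2)+2 = (k+2) + (k+3) + 1 by ring, useq_add,
      vprod_eq L e k, vprod_eq L e (k+1), vprod_eq L e (k+2), vprod_eq L e (k+3)]
    have h2 : useq L e (k+2) = L * useq L e (k+1) + e * useq L e k := rfl
    have h3 : useq L e (k+3) = L * useq L e (k+2) + e * useq L e (k+1) := rfl
    have h4 : useq L e (k+4) = L * useq L e (k+3) + e * useq L e (k+2) := rfl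
    have h5 : useq L e (k+5) = L * useq L e (k+4) + e * useq L e (k+3) := rfl
    have h6 : useq L e (k+6) = L * useq L e (k+5) + e * useq L e (k+4) := rfl
    rw [show k+1+3 = k+4 by ring, show k+2+3 = k+5 by ring, show k+3+3 = k+6 by ring,
      show k+1+2 = k+3 by ring, show k+2+2 = k+4 by ring, show k+3+2 = k+5 by ring,
      show k+1+1 = k+2 by ring, show k+2+1 = k+3 by ring, show k+3+1 = k+4 by ring]
    rw [h6, h5, h4, h3, h2]
    have g2 : useq L e 2 = L := by simp [useq, useq_two_step]
    have g3 : useq L e 3 = L*L + e := by rw [useq_two_step]; simp [useq]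
    have g4 : useq L e 4 = L*(L*L+e) + e*L := by rw [useq_two_step, g3]; simp [useq]
    have g1 : useq L e 1 = 1 := rfl
    rw [g1, g2, g3, g4]
    rcases he with rfl | rfl <;> ring

lemma mainU (L e : ℝ) (he : e = 1 ∨ e = -1) (q : ℕ) :
    (useq L e 1 * useq L e 2 * useq L e 3 * useq L e 4) *
        ∑ n ∈ Finset.range (q+1), (-1:ℝ)^(n+q) * (useq L e (2*n))^2 =
      (useq L e 2)^2 * (vprod L e (q+1) + (e*L^2+2) * vprod L e (q+2) + vprod L e (q+3)) := by
  induction q with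
  | zero =>
    simp [vprod, Finset.prod_range_succ, useq]
  | succ q ih =>
    rw [Finset.sum_range_succ]
    have hsg : ∀ n : ℕ, ((-1:ℝ))^(n+(q+1)) = -((-1:ℝ))^(n+q) := by
      intro n; rw [show n+(q+1) = (n+q)+1 by ring, pow_succ]; ring
    have hs2 : ∑ n ∈ Finset.range (q+1), (-1:ℝ)^(n+(q+1)) * (useq L e (2*n))^2
        = -∑ n ∈ Finset.range (q+1), (-1:ℝ)^(n+q) * (useq L e (2*n))^2 := by
      rw [← Finset.sum_neg_distrib]
      exact Finset.sum_congr rfl fun n _ => by rw [hsg]; ring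
    rw [hs2, hsg]
    have hk := key L e he q
    rw [show 2*(q+1) = 2*q+2 by ring]
    have hq2 : ((-1:ℝ))^(q+1+q) = (-1:ℝ)^(2*q+1) := by ring_nf
    have hq3 : ((-1:ℝ))^(2*q+1) = -1 := by
      rw [pow_succ, pow_mul]; norm_num
    rw [hq2, hq3] at *
    linear_combination -ih + hk

lemma fibP_eq_useq (x : ℝ) : ∀ n, fibP n x = useq x 1 n := by
  intro n
  induction n using Nat.twoStepInduction with
  | zero => rfl
  | one => rfl
  | more n ih1 ih2 =>
    show x * fibP (n+1) x + fibP n x = x * useq x 1 (n+1) + 1 * useq x 1 n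
    rw [ih1, ih2]; ring

lemma fib_add (x : ℝ) (m n : ℕ) :
    fibP (m + n + 1) x = fibP (m+1) x * fibP (n+1) x + fibP m x * fibP n x := by
  simp only [fibP_eq_useq]
  rw [useq_add]; ring

lemma lucas_fib (x : ℝ) : ∀ t, lucasP (t+1) x = fibP (t+2) x + fibP t x := by
  intro t
  induction t using Nat.twoStepInduction with
  | zero => show x = x * 1 + 0 + 0; ring
  | one => show x * x + 2 = x * (x*1+0) + 1 + 1; ring
  | more t ih1 ih2 =>
    show x * lucasP (t+2) x + lucasP (t+1) x = fibP (t+4) x + fibP (t+2) x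
    rw [ih1, ih2,
      show fibP (t+4) x = x * fibP (t+3) x + fibP (t+2) x from rfl,
      show fibP (t+3) x = x * fibP (t+2) x + fibP (t+1) x from rfl,
      show fibP (t+2) x = x * fibP (t+1) x + fibP t x from rfl]
    ring

lemma fibCatalan (x : ℝ) : ∀ t, fibP (t+1) x ^ 2 = fibP t x * fibP (t+2) x + (-1:ℝ)^t := by
  intro t
  induction t with
  | zero => simp [fibP]
  | succ t ih =>
    rw [show fibP (t+1+2) x = x * fibP (t+2) x + fibP (t+1) x from rfl,
      show fibP (t+2) x = x * fibP (t+1) x + fibP t x from rfl] at *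
    rw [pow_succ]
    linear_combination -ih

lemma fib_shift (x : ℝ) (t : ℕ) :
    ∀ n, fibP (n + 2*(t+1)) x = lucasP (t+1) x * fibP (n + (t+1)) x + (-1:ℝ)^t * fibP n x := by
  intro n
  induction n using Nat.twoStepInduction with
  | zero =>
    rw [show 0 + 2*(t+1) = t + (t+1) + 1 by ring, fib_add, lucas_fib,
      show 0 + (t+1) = t+1 by ring]
    show _ = _ * _ + (-1:ℝ)^t * 0
    ring
  | one =>
    rw [show 1 + 2*(t+1) = (t+1) + (t+1) + 1 by ring, fib_add, lucas_fib,
      show 1 + (t+1) = t+2 by ring]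
    show fibP (t+2) x * fibP (t+2) x + fibP (t+1) x * fibP (t+1) x
        = (fibP (t+2) x + fibP t x) * fibP (t+2) x + (-1:ℝ)^t * 1
    linear_combination fibCatalan x t
  | more n ih1 ih2 =>
    rw [show n + 2 + 2*(t+1) = (n + 2*(t+1)) + 2 by ring,
      show fibP ((n+2*(t+1))+2) x = x * fibP ((n+2*(t+1))+1) x + fibP (n+2*(t+1)) x from rfl,
      show (n+2*(t+1))+1 = (n+1) + 2*(t+1) by ring, ih1, ih2,
      show n + 2 + (t+1) = (n + (t+1)) + 2 by ring,
      show fibP ((n+(t+1))+2) x = x * fibP ((n+(t+1))+1) x + fibP (n+(t+1)) x from rfl,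
      show (n+(t+1))+1 = (n+1)+(t+1) by ring,
      show fibP (n+2) x = x * fibP (n+1) x + fibP n x from rfl]
    ring

lemma fib_scale (x : ℝ) (t : ℕ) :
    ∀ m, fibP ((t+1) * m) x = fibP (t+1) x * useq (lucasP (t+1) x) ((-1:ℝ)^t) m := by
  intro m
  induction m using Nat.twoStepInduction with
  | zero => simp [fibP, useq]
  | one => simp [useq]
  | more m ih1 ih2 =>
    rw [show (t+1)*(m+2) = (t+1)*m + 2*(t+1) by ring, fib_shift,
      show (t+1)*m + (t+1) = (t+1)*(m+1) by ring, ih1, ih2,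
      show useq (lucasP (t+1) x) ((-1:ℝ)^t) (m+2)
        = lucasP (t+1) x * useq (lucasP (t+1) x) ((-1:ℝ)^t) (m+1)
          + (-1:ℝ)^t * useq (lucasP (t+1) x) ((-1:ℝ)^t) m from rfl]
    ring

lemma lucas_double (x : ℝ) (t : ℕ) :
    lucasP (2*(t+1)) x = lucasP (t+1) x ^ 2 + 2 * (-1:ℝ)^t := by
  rw [show 2*(t+1) = (2*t+1)+1 by ring, lucas_fib,
    show 2*t+1+2 = (t+1)+(t+1)+1 by ring, fib_add x (t+1) (t+1),
    show 2*t+1 = t + t + 1 by ring, fib_add x t t, lucas_fib]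
  linear_combination 2 * fibCatalan x t

theorem stmt_18 (s q : ℕ) (hs : 1 ≤ s) (x : ℝ) :
    sFiboDen4 s x * ∑ n ∈ Finset.range (q + 1), (-1 : ℝ) ^ (n + q) * (fibP (2 * s * n) x) ^ 2 =
      (fibP (2 * s) x) ^ 2 *
        (sFiboNum4 s (q + 1) x + (-1 : ℝ) ^ (s + 1) * lucasP (2 * s) x * sFiboNum4 s (q + 2) x +
          sFiboNum4 s (q + 3) x) := by
  obtain ⟨t, rfl⟩ : ∃ t, s = t + 1 := ⟨s - 1, by omega⟩
  set Fs : ℝ := fibP (t+1) x with hFs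
  set L : ℝ := lucasP (t+1) x with hL
  obtain ⟨e, he, hE⟩ : ∃ e : ℝ, (e = 1 ∨ e = -1) ∧ ((-1:ℝ))^t = e := by
    rcases Nat.even_or_odd t with h | h
    · exact ⟨1, Or.inl rfl, h.neg_one_pow⟩
    · exact ⟨-1, Or.inr rfl, h.neg_one_pow⟩
  -- rewrite the denominator
  have hden : sFiboDen4 (t+1) x = Fs^4 * (useq L e 1 * useq L e 2 * useq L e 3 * useq L e 4) := by
    simp only [sFiboDen4, Finset.prod_range_succ, Finset.prod_range_zero, fib_scale, hE]
    ring
  -- rewrite the numerators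
  have hnum : ∀ m : ℕ, sFiboNum4 (t+1) m x = Fs^4 * vprod L e m := by
    intro m
    simp only [sFiboNum4, vprod, Finset.prod_range_succ, Finset.prod_range_zero, fib_scale, hE]
    ring
  have h2s : fibP (2*(t+1)) x = Fs * useq L e 2 := by
    rw [show 2*(t+1) = (t+1)*2 by ring, fib_scale, hE]
  have hluc : lucasP (2*(t+1)) x = L^2 + 2*e := by
    rw [lucas_double, hE]
  have hsign : ((-1:ℝ))^(t+1+1) = e := by
    rw [pow_succ, pow_succ, hE]; ring
  have hsum : ∑ n ∈ Finset.range (q+1), (-1:ℝ)^(n+q) * (fibP (2*(t+1)*n) x)^2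
      = Fs^2 * ∑ n ∈ Finset.range (q+1), (-1:ℝ)^(n+q) * (useq L e (2*n))^2 := by
    rw [Finset.mul_sum]
    refine Finset.sum_congr rfl fun n _ => ?_
    rw [show 2*(t+1)*n = (t+1)*(2*n) by ring, fib_scale, hE]
    ring
  rw [hden, hnum, hnum, hnum, h2s, hluc, hsign, hsum]
  have hm := mainU L e he q
  rcases he with rfl | rfl <;> linear_combination Fs^6 * hm
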